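/- For every real number x with 0 < x ≤ 1, the strict inequality K(x) < c·x holds, where K(x) = ∫₀^∞ e^{−t} (t^x − 1)/(t − 1) dt and c = ∫₀^∞ e^{−t} (ln t)/(t − 1) dt. -/

import Mathlib

open MeasureTheory

/-- The Kurepa function `K(x) = ∫₀^∞ e^{−t} (t^x − 1)/(t − 1) dt`. -/
noncomputable def kurepa (x : ℝ) : ℝ :=
  ∫ t in Set.Ioi (0 : ℝ), Real.exp (-t) * (t ^ x - 1) / (t - 1)

/-- The constant `c = K′(0) = ∫₀^∞ e^{−t} (ln t)/(t − 1) dt`. -/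
noncomputable def kurepaDerivZero : ℝ :=
  ∫ t in Set.Ioi (0 : ℝ), Real.exp (-t) * Real.log t / (t - 1)

open Set

/- elementary bound: `|t^x - 1| ≤ |t - 1|` for `0 < x ≤ 1`, `t > 0`. -/
lemma kurepa_aux_abs_rpow {x t : ℝ} (hx : 0 < x) (hx' : x ≤ 1) (ht : 0 < t) :
    |t ^ x - 1| ≤ |t - 1| := by
  rcases le_or_gt t 1 with h | h
  · have h1 : t ^ x ≤ 1 := Real.rpow_le_one ht.le h hx.le
    have h2 : t ≤ t ^ x := by
      calc t = t ^ (1 : ℝ) := (Real.rpow_one t).symm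
        _ ≤ t ^ x := Real.rpow_le_rpow_of_exponent_ge ht h hx'
    rw [abs_of_nonpos (by linarith), abs_of_nonpos (by linarith)]; linarith
  · have h1 : 1 ≤ t ^ x := Real.one_le_rpow h.le hx.le
    have h2 : t ^ x ≤ t := by
      calc t ^ x ≤ t ^ (1 : ℝ) := Real.rpow_le_rpow_of_exponent_le h.le hx'
        _ = t := Real.rpow_one t
    rw [abs_of_nonneg (by linarith), abs_of_nonneg (by linarith)]; linarith

/- elementary bound: `|log t / (t-1)| ≤ 2 / √t` for `t > 0`. -/
lemma kurepa_aux_abs_log {t : ℝ} (ht : 0 < t) :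
    |Real.log t / (t - 1)| ≤ 2 / Real.sqrt t := by
  rcases eq_or_ne t 1 with rfl | hne
  · simp
  have hu0 : 0 < Real.sqrt t := Real.sqrt_pos.mpr ht
  set u := Real.sqrt t with hu
  have hut : u * u = t := Real.mul_self_sqrt ht.le
  have hlog : Real.log t = 2 * Real.log u := by
    rw [hu, Real.log_sqrt ht.le]; ring
  have h1 : Real.log u ≤ u - 1 := Real.log_le_sub_one_of_pos hu0
  have h2 : -Real.log u ≤ u⁻¹ - 1 := by
    have := Real.log_le_sub_one_of_pos (inv_pos.mpr hu0)
    rwa [Real.log_inv] at this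
  have h2' : -Real.log u * u ≤ 1 - u := by
    have := mul_le_mul_of_nonneg_right h2 hu0.le
    calc -Real.log u * u ≤ (u⁻¹ - 1) * u := this
      _ = 1 - u := by field_simp
  have htne : t - 1 ≠ 0 := sub_ne_zero.mpr hne
  rw [abs_div, div_le_div_iff₀ (abs_pos.mpr htne) hu0]
  -- goal : |log t| * u ≤ 2 * |t - 1|
  rcases lt_or_gt_of_ne hne with h | h
  · have hu1 : u < 1 := by nlinarith
    have hlneg : Real.log t < 0 := Real.log_neg ht h
    rw [abs_of_neg hlneg, abs_of_neg (by linarith : t - 1 < 0)]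
    nlinarith
  · have hu1 : 1 < u := by nlinarith
    have hlpos : 0 < Real.log t := Real.log_pos h
    rw [abs_of_pos hlpos, abs_of_pos (by linarith : 0 < t - 1)]
    nlinarith

lemma kurepa_int_g1 {x : ℝ} (hx : 0 < x) (hx' : x ≤ 1) :
    IntegrableOn (fun t => Real.exp (-t) * (t ^ x - 1) / (t - 1)) (Ioi (0 : ℝ)) := by
  have hexp : IntegrableOn (fun t : ℝ => Real.exp (-1 * t)) (Ioi 0) :=
    exp_neg_integrableOn_Ioi 0 one_pos
  apply Integrable.mono' hexp
  · apply Measurable.aestronglyMeasurable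
    exact ((Real.measurable_exp.comp measurable_neg).mul
      (((Real.continuous_rpow_const hx.le).measurable).sub measurable_const)).div
      (measurable_id.sub measurable_const)
  · filter_upwards [ae_restrict_mem measurableSet_Ioi] with t ht
    have ht0 : (0 : ℝ) < t := ht
    have key : |t ^ x - 1| / |t - 1| ≤ 1 := by
      rcases eq_or_ne t 1 with rfl | hne
      · simp
      · rw [div_le_one (abs_pos.mpr (sub_ne_zero.mpr hne))]
        exact kurepa_aux_abs_rpow hx hx' ht0
    have : ‖Real.exp (-t) * (t ^ x - 1) / (t - 1)‖
        = Real.exp (-t) * (|t ^ x - 1| / |t - 1|) := by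
      rw [Real.norm_eq_abs, abs_div, abs_mul, abs_of_pos (Real.exp_pos _), mul_div_assoc]
    rw [this, neg_one_mul]
    calc Real.exp (-t) * (|t ^ x - 1| / |t - 1|) ≤ Real.exp (-t) * 1 :=
          mul_le_mul_of_nonneg_left key (Real.exp_pos _).le
      _ = Real.exp (-t) := mul_one _

lemma kurepa_int_g2 :
    IntegrableOn (fun t => Real.exp (-t) * Real.log t / (t - 1)) (Ioi (0 : ℝ)) := by
  have hG : IntegrableOn (fun t : ℝ => 2 * (Real.exp (-t) * t ^ ((1:ℝ)/2 - 1))) (Ioi 0) :=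
    (Real.GammaIntegral_convergent (by norm_num : (0:ℝ) < 1/2)).const_mul 2
  apply Integrable.mono' hG
  · apply Measurable.aestronglyMeasurable
    exact ((Real.measurable_exp.comp measurable_neg).mul Real.measurable_log).div
      (measurable_id.sub measurable_const)
  · filter_upwards [ae_restrict_mem measurableSet_Ioi] with t ht
    have ht0 : (0 : ℝ) < t := ht
    have hs0 : 0 < Real.sqrt t := Real.sqrt_pos.mpr ht0
    have hpow : t ^ ((1:ℝ)/2 - 1) = (Real.sqrt t)⁻¹ := by
      rw [show (1:ℝ)/2 - 1 = -(1/2) by norm_num, Real.rpow_neg ht0.le, Real.sqrt_eq_rpow]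
    have : ‖Real.exp (-t) * Real.log t / (t - 1)‖
        = Real.exp (-t) * |Real.log t / (t - 1)| := by
      rw [Real.norm_eq_abs, mul_div_assoc, abs_mul, abs_of_pos (Real.exp_pos _)]
    rw [this, hpow]
    calc Real.exp (-t) * |Real.log t / (t - 1)| ≤ Real.exp (-t) * (2 / Real.sqrt t) :=
          mul_le_mul_of_nonneg_left (kurepa_aux_abs_log ht0) (Real.exp_pos _).le
      _ = 2 * (Real.exp (-t) * (Real.sqrt t)⁻¹) := by rw [div_eq_mul_inv]; ring

/- Padé-type bound : `(1+a) log a < 2 (a-1)` for `0 < a < 1`. -/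
lemma kurepa_lemA {a : ℝ} (h0 : 0 < a) (h1 : a < 1) :
    (1 + a) * Real.log a < 2 * (a - 1) := by
  set f : ℝ → ℝ := fun t => 2 * (t - 1) - (1 + t) * Real.log t with hf
  have key : StrictAntiOn f (Ioc 0 1) := by
    apply strictAntiOn_of_deriv_neg (convex_Ioc 0 1)
    · apply ContinuousOn.sub
      · exact (continuous_const.mul (continuous_id.sub continuous_const)).continuousOn
      · exact ((continuous_const.add continuous_id).continuousOn).mul
          (Real.continuousOn_log.mono (fun t ht => ne_of_gt ht.1))
    · intro t ht
      rw [interior_Ioc] at ht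
      have ht0 : 0 < t := ht.1
      have ht1 : t < 1 := ht.2
      have hder : HasDerivAt f (2 * 1 - (1 * Real.log t + (1 + t) * t⁻¹)) t := by
        exact (((hasDerivAt_id t).sub_const 1).const_mul 2).sub
          (((hasDerivAt_id t).const_add 1).mul (Real.hasDerivAt_log (ne_of_gt ht0)))
      rw [hder.deriv]
      have hstrict : Real.log t⁻¹ < t⁻¹ - 1 :=
        Real.log_lt_sub_one_of_pos (inv_pos.mpr ht0)
          (by intro hc; rw [inv_eq_one] at hc; exact (ne_of_lt ht1) hc)
      rw [Real.log_inv] at hstrict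
      have h1t : 1 < t⁻¹ := (one_lt_inv₀ ht0).mpr ht1
      have hprod : (1 + t) * t⁻¹ = 1 + t⁻¹ := by
        rw [add_mul, one_mul, mul_inv_cancel₀ (ne_of_gt ht0), add_comm]
      rw [hprod]
      linarith
  have hmem1 : (1 : ℝ) ∈ Ioc (0:ℝ) 1 := by constructor <;> norm_num
  have hmema : a ∈ Ioc (0:ℝ) 1 := ⟨h0, h1.le⟩
  have := key hmema hmem1 h1
  simp only [hf, Real.log_one] at this
  linarith

/- `2 log s - s + s⁻¹ ≥ 0` for `0 < s ≤ 1`. -/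
lemma kurepa_lemB {s : ℝ} (h0 : 0 < s) (h1 : s < 1) :
    0 ≤ 2 * Real.log s - s + s⁻¹ := by
  set f : ℝ → ℝ := fun t => 2 * Real.log t - t + t⁻¹ with hf
  have key : StrictAntiOn f (Ioc 0 1) := by
    apply strictAntiOn_of_deriv_neg (convex_Ioc 0 1)
    · apply ContinuousOn.add
      · apply ContinuousOn.sub
        · exact continuousOn_const.mul (Real.continuousOn_log.mono (fun t ht => ne_of_gt ht.1))
        · exact continuousOn_id
      · exact continuousOn_id.inv₀ (fun t ht => ne_of_gt ht.1)
    · intro t ht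
      rw [interior_Ioc] at ht
      have ht0 : 0 < t := ht.1
      have ht1 : t < 1 := ht.2
      have hder : HasDerivAt f (2 * t⁻¹ - 1 + (-(t ^ 2)⁻¹)) t := by
        exact (((Real.hasDerivAt_log (ne_of_gt ht0)).const_mul 2).sub (hasDerivAt_id t)).add
          (hasDerivAt_inv (ne_of_gt ht0))
      rw [hder.deriv]
      have ht2 : (0:ℝ) < t ^ 2 := by positivity
      have heq : 2 * t⁻¹ - 1 + (-(t ^ 2)⁻¹) = -((1 - t) ^ 2 / t ^ 2) := by
        field_simp; ring
      rw [heq]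
      have : (0:ℝ) < (1 - t) ^ 2 / t ^ 2 := div_pos (pow_pos (by linarith) 2) ht2
      linarith
  have hmem1 : (1 : ℝ) ∈ Ioc (0:ℝ) 1 := by constructor <;> norm_num
  have hmems : s ∈ Ioc (0:ℝ) 1 := ⟨h0, h1.le⟩
  have := key hmems hmem1 h1
  simp only [hf, Real.log_one] at this
  norm_num at this
  linarith

/- The key pointwise positivity on `(0,1)` of the symmetrized integrand. -/
lemma kurepa_keypos {x s : ℝ} (hx : 0 < x) (hx' : x ≤ 1) (hs0 : 0 < s) (hs1 : s < 1) :
    0 < Real.exp (-s) * (x * Real.log s - (s ^ x - 1)) / (s - 1)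
        + |(-(s ^ 2)⁻¹)| * (Real.exp (-s⁻¹) * (x * Real.log s⁻¹ - (s⁻¹ ^ x - 1)) / (s⁻¹ - 1)) := by
  have ha0 : 0 < s ^ x := Real.rpow_pos_of_pos hs0 x
  have ha1 : s ^ x < 1 := Real.rpow_lt_one hs0.le hs1 hx
  have hsa : s ≤ s ^ x := by
    calc s = s ^ (1 : ℝ) := (Real.rpow_one s).symm
      _ ≤ s ^ x := Real.rpow_le_rpow_of_exponent_ge hs0 hs1.le hx'
  set a := s ^ x with ha
  have hla : x * Real.log s = Real.log a := (Real.log_rpow hs0 x).symm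
  have hinv : s⁻¹ ^ x = a⁻¹ := by rw [Real.inv_rpow hs0.le]
  have hne : a ≠ 1 := ne_of_lt ha1
  set P := a - 1 - Real.log a with hP
  set Q := a⁻¹ - 1 + Real.log a with hQ
  have hPpos : 0 < P := by
    have := Real.log_lt_sub_one_of_pos ha0 hne
    rw [hP]; linarith
  have hQP : Q < P / a := by
    rw [lt_div_iff₀ ha0]
    have hA := kurepa_lemA ha0 ha1
    have haQ : Q * a = 1 - a + a * Real.log a := by
      rw [hQ, add_mul, sub_mul, inv_mul_cancel₀ ha0.ne']; ring
    rw [haQ, hP]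
    nlinarith
  -- exp (-s⁻¹) ≤ s * s * exp (-s)
  have hexp : Real.exp (-s⁻¹) ≤ s * s * Real.exp (-s) := by
    have hB := kurepa_lemB hs0 hs1
    have h1 : Real.exp (-s⁻¹) ≤ Real.exp (2 * Real.log s - s) := by
      apply Real.exp_le_exp.mpr; linarith
    have h2 : Real.exp (2 * Real.log s - s) = s * s * Real.exp (-s) := by
      rw [show 2 * Real.log s - s = Real.log s + Real.log s + (-s) by ring,
        Real.exp_add, Real.exp_add, Real.exp_log hs0]
    linarith [h1, h2.le, h2.ge]
  have hE : Real.exp (-s⁻¹) * Q < s * Real.exp (-s) * P := by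
    calc Real.exp (-s⁻¹) * Q < Real.exp (-s⁻¹) * (P / a) :=
          mul_lt_mul_of_pos_left hQP (Real.exp_pos _)
      _ ≤ Real.exp (-s⁻¹) * (P / s) :=
          mul_le_mul_of_nonneg_left (div_le_div_of_nonneg_left hPpos.le hs0 hsa)
            (Real.exp_pos _).le
      _ ≤ (s * s * Real.exp (-s)) * (P / s) := by
          apply mul_le_mul_of_nonneg_right hexp
          positivity
      _ = s * Real.exp (-s) * P := by field_simp
  have hsne : s ≠ 0 := ne_of_gt hs0
  have hs1ne : s - 1 ≠ 0 := by intro hc; nlinarith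
  have hinvne : s⁻¹ - 1 ≠ 0 := by
    have : 1 < s⁻¹ := (one_lt_inv₀ hs0).mpr hs1
    intro hc; nlinarith
  have habs : |(-(s ^ 2)⁻¹)| = (s ^ 2)⁻¹ := by
    rw [abs_neg, abs_of_pos (by positivity)]
  have h1sne : (1:ℝ) - s ≠ 0 := by intro hc; nlinarith
  have hisub : s⁻¹ - 1 = (1 - s) / s := by field_simp
  have heq : Real.exp (-s) * (x * Real.log s - (s ^ x - 1)) / (s - 1)
        + |(-(s ^ 2)⁻¹)| * (Real.exp (-s⁻¹) * (x * Real.log s⁻¹ - (s⁻¹ ^ x - 1)) / (s⁻¹ - 1))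
      = (s * Real.exp (-s) * P - Real.exp (-s⁻¹) * Q) / (s * (1 - s)) := by
    rw [habs, Real.log_inv, ← ha, hinv]
    rw [show x * -Real.log s = -(x * Real.log s) by ring, hla]
    rw [hP, hQ, hisub]
    rw [show a⁻¹ = 1 / a by rw [one_div]]
    field_simp
    ring
  rw [heq]
  apply div_pos (by linarith) (by nlinarith)

theorem kurepa_lt (x : ℝ) (hx : 0 < x) (hx' : x ≤ 1) :
    kurepa x < kurepaDerivZero * x := by
  have hg1 : IntegrableOn (fun t => Real.exp (-t) * (t ^ x - 1) / (t - 1)) (Ioi (0 : ℝ)) :=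
    kurepa_int_g1 hx hx'
  have hg2 : IntegrableOn (fun t => Real.exp (-t) * Real.log t / (t - 1)) (Ioi (0 : ℝ)) :=
    kurepa_int_g2
  set D : ℝ → ℝ := fun t => Real.exp (-t) * (x * Real.log t - (t ^ x - 1)) / (t - 1) with hD
  have hDeq : D = fun t => x * (Real.exp (-t) * Real.log t / (t - 1))
      - Real.exp (-t) * (t ^ x - 1) / (t - 1) := by
    funext t
    rw [hD]
    rw [show x * (Real.exp (-t) * Real.log t / (t - 1))
        = x * (Real.exp (-t) * Real.log t) / (t - 1) from (mul_div_assoc _ _ _).symm,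
      div_sub_div_same]
    ring_nf
  have hDint : IntegrableOn D (Ioi 0) := by
    rw [hDeq]; exact (hg2.const_mul x).sub hg1
  have hint : ∫ t in Ioi (0:ℝ), D t = kurepaDerivZero * x - kurepa x := by
    rw [hDeq, integral_sub (hg2.const_mul x) hg1, integral_const_mul]
    unfold kurepa kurepaDerivZero
    ring
  -- change of variables on (1, ∞)
  have hderiv : ∀ s ∈ Ioo (0:ℝ) 1, HasDerivWithinAt (fun y : ℝ => y⁻¹) (-(s ^ 2)⁻¹) (Ioo 0 1) s :=
    fun s hs => (hasDerivAt_inv (ne_of_gt hs.1)).hasDerivWithinAt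
  have hinj : InjOn (fun y : ℝ => y⁻¹) (Ioo 0 1) := fun a _ b _ h => inv_injective h
  have himg : (fun y : ℝ => y⁻¹) '' Ioo 0 1 = Ioi 1 := by
    ext t
    simp only [Set.mem_image, Set.mem_Ioo, Set.mem_Ioi]
    constructor
    · rintro ⟨s, ⟨h0, h1⟩, rfl⟩
      exact (one_lt_inv₀ h0).mpr h1
    · intro ht
      exact ⟨t⁻¹, ⟨inv_pos.mpr (lt_trans one_pos ht), inv_lt_one_of_one_lt₀ ht⟩, inv_inv t⟩
  have hchg : ∫ t in Ioi (1:ℝ), D t = ∫ s in Ioo (0:ℝ) 1, |(-(s ^ 2)⁻¹)| • D s⁻¹ := by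
    rw [← himg, integral_image_eq_integral_abs_deriv_smul measurableSet_Ioo hderiv hinj]
  have hint2 : IntegrableOn (fun s => |(-(s ^ 2)⁻¹)| • D s⁻¹) (Ioo (0:ℝ) 1) := by
    rw [← integrableOn_image_iff_integrableOn_abs_deriv_smul measurableSet_Ioo hderiv hinj, himg]
    exact hDint.mono_set (Ioi_subset_Ioi zero_le_one)
  have hintD01 : IntegrableOn D (Ioo (0:ℝ) 1) := hDint.mono_set Ioo_subset_Ioi_self
  -- split the integral
  have hsplit : ∫ t in Ioi (0:ℝ), D t = (∫ t in Ioo (0:ℝ) 1, D t) + ∫ t in Ioi (1:ℝ), D t := by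
    have e1 : ∫ t in Ioi (0:ℝ), D t = (∫ t in Ioc (0:ℝ) 1, D t) + ∫ t in Ioi (1:ℝ), D t := by
      rw [← setIntegral_union (Ioc_disjoint_Ioi le_rfl) measurableSet_Ioi
        (hDint.mono_set Ioc_subset_Ioi_self) (hDint.mono_set (Ioi_subset_Ioi zero_le_one)),
        Ioc_union_Ioi_eq_Ioi (zero_le_one : (0:ℝ) ≤ 1)]
    rw [e1, integral_Ioc_eq_integral_Ioo]
  have hcomb : (∫ s in Ioo (0:ℝ) 1, D s) + (∫ s in Ioo (0:ℝ) 1, |(-(s ^ 2)⁻¹)| • D s⁻¹)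
      = ∫ s in Ioo (0:ℝ) 1, (D s + |(-(s ^ 2)⁻¹)| • D s⁻¹) :=
    (integral_add hintD01 hint2).symm
  have hpos : ∀ s ∈ Ioo (0:ℝ) 1, 0 < D s + |(-(s ^ 2)⁻¹)| • D s⁻¹ := by
    intro s hs
    have := kurepa_keypos hx hx' hs.1 hs.2
    simpa [hD, smul_eq_mul] using this
  have hposint : 0 < ∫ s in Ioo (0:ℝ) 1, (D s + |(-(s ^ 2)⁻¹)| • D s⁻¹) := by
    rw [setIntegral_pos_iff_support_of_nonneg_ae]
    · have hsub : Ioo (0:ℝ) 1 ⊆ Function.support (fun s => D s + |(-(s ^ 2)⁻¹)| • D s⁻¹) :=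
        fun s hs => ne_of_gt (hpos s hs)
      rw [Set.inter_eq_self_of_subset_right hsub]
      simp [Real.volume_Ioo]
    · filter_upwards [ae_restrict_mem measurableSet_Ioo] with s hs
      exact (hpos s hs).le
    · exact hintD01.add hint2
  have : 0 < ∫ t in Ioi (0:ℝ), D t := by
    rw [hsplit, hchg, hcomb]
    exact hposint
  linarith [hint ▸ this]
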